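/- Let σ : ℝ → ℝ be a twice continuously differentiable function with σ(t) > 0 for all t. Then σ satisfies the differential equation 2 σ(t) σ''(t) = σ'(t)² + 1/4 for all t ∈ ℝ if and only if there exist a real constant C > 0 and t₀ ∈ ℝ such that σ(t) = (t − t₀)²/(16C) + C for all t ∈ ℝ. -/

import Mathlib

/-- Characterization (proof of Theorem 4.2) of the positive solutions of the ODE
`2 σ σ'' = (σ')² + 1/4`: they are exactly the functions `σ(t) = (t−t₀)²/(16C) + C`
with `C > 0`. -/
theorem stmt1 (σ : ℝ → ℝ) (hσ : ContDiff ℝ 2 σ) (hpos : ∀ t : ℝ, 0 < σ t) :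
    (∀ t : ℝ, 2 * σ t * deriv (deriv σ) t = (deriv σ t) ^ 2 + 1 / 4) ↔
      ∃ C : ℝ, 0 < C ∧ ∃ t₀ : ℝ, ∀ t : ℝ, σ t = (t - t₀) ^ 2 / (16 * C) + C := by
  have hd1 : Differentiable ℝ σ := hσ.differentiable (by norm_num)
  have hσ' : ContDiff ℝ 1 (deriv σ) :=
    ((contDiff_succ_iff_deriv (n := 1)).mp (by exact_mod_cast hσ)).2.2
  have hd2 : Differentiable ℝ (deriv σ) := hσ'.differentiable one_ne_zero
  constructor
  · intro heq
    have hFd : ∀ t, HasDerivAt (fun t => ((deriv σ t) ^ 2 + 1 / 4) / σ t) 0 t := by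
      intro t
      have h1 : HasDerivAt (fun t => (deriv σ t) ^ 2 + 1 / 4)
          (2 * deriv σ t * deriv (deriv σ) t) t := by
        have := (((hd2 t).hasDerivAt).pow 2).add_const (1/4 : ℝ)
        refine this.congr_deriv ?_
        push_cast; ring
      have h2 := h1.div ((hd1 t).hasDerivAt) (ne_of_gt (hpos t))
      have h5 : (2 * deriv σ t * deriv (deriv σ) t * σ t
          - (deriv σ t ^ 2 + 1 / 4) * deriv σ t) / σ t ^ 2 = 0 := by
        have h6 : 2 * deriv σ t * deriv (deriv σ) t * σ t
            - (deriv σ t ^ 2 + 1 / 4) * deriv σ t = 0 := by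
          linear_combination deriv σ t * heq t
        rw [h6, zero_div]
      exact h5 ▸ h2
    have hFc : ∀ t, ((deriv σ t) ^ 2 + 1 / 4) / σ t
        = ((deriv σ 0) ^ 2 + 1 / 4) / σ 0 := fun t =>
      is_const_of_deriv_eq_zero (fun s => (hFd s).differentiableAt)
        (fun s => (hFd s).deriv) t 0
    obtain ⟨k, hk⟩ : ∃ k : ℝ, k = ((deriv σ 0) ^ 2 + 1 / 4) / σ 0 := ⟨_, rfl⟩
    have hkey : ∀ t, (deriv σ t) ^ 2 + 1 / 4 = k * σ t := by
      intro t
      have h := hFc t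
      rw [← hk, div_eq_iff (hpos t).ne'] at h
      exact h
    have hkpos : 0 < k := by nlinarith [hkey 0, hpos 0, sq_nonneg (deriv σ 0)]
    have hk0 : k ≠ 0 := hkpos.ne'
    have hdd : ∀ t, deriv (deriv σ) t = k / 2 := by
      intro t
      have h := heq t
      rw [hkey t] at h
      have h2 : σ t * (2 * deriv (deriv σ) t) = σ t * k := by linear_combination h
      have := mul_left_cancel₀ (hpos t).ne' h2
      linarith
    have hds : ∀ t, deriv σ t = k / 2 * t + deriv σ 0 := by
      intro t
      have hg : ∀ s, HasDerivAt (fun t => deriv σ t - k / 2 * t) 0 s := by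
        intro s
        have h1 := (hd2 s).hasDerivAt
        rw [hdd s] at h1
        have h2 := h1.sub ((hasDerivAt_id s).const_mul (k/2))
        simp only [id_eq] at h2
        refine h2.congr_deriv ?_
        ring
      have := is_const_of_deriv_eq_zero (fun s => (hg s).differentiableAt)
        (fun s => (hg s).deriv) t 0
      simp only [mul_zero, sub_zero] at this
      linarith
    have hs : ∀ t, σ t = k / 4 * t ^ 2 + deriv σ 0 * t + σ 0 := by
      intro t
      have hg : ∀ s, HasDerivAt (fun t => σ t - (k / 4 * t ^ 2 + deriv σ 0 * t)) 0 s := by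
        intro s
        have h1 := (hd1 s).hasDerivAt
        rw [hds s] at h1
        have h2 : HasDerivAt (fun t : ℝ => k / 4 * t ^ 2 + deriv σ 0 * t)
            (k / 2 * s + deriv σ 0) s := by
          have := ((hasDerivAt_pow 2 s).const_mul (k/4)).add
            ((hasDerivAt_id s).const_mul (deriv σ 0))
          simp only [id_eq] at this
          refine this.congr_deriv ?_
          push_cast; ring
        have h3 := h1.sub h2
        exact h3.congr_deriv (by ring)
      have := is_const_of_deriv_eq_zero (fun s => (hg s).differentiableAt)
        (fun s => (hg s).deriv) t 0
      simp only [ne_eq, OfNat.ofNat_ne_zero, not_false_eq_true, zero_pow, mul_zero,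
        add_zero, sub_zero] at this
      linarith [this]
    have hbc : (deriv σ 0) ^ 2 + 1 / 4 = k * σ 0 := hkey 0
    refine ⟨1 / (4 * k), by positivity, -(2 * deriv σ 0) / k, fun t => ?_⟩
    rw [hs t]
    field_simp
    ring_nf
    linear_combination (-64) * hbc
  · rintro ⟨C, hC, t₀, h⟩ t
    have hσeq : σ = fun t => (t - t₀) ^ 2 / (16 * C) + C := funext h
    have h1 : ∀ s, HasDerivAt σ ((s - t₀) / (8 * C)) s := by
      intro s
      rw [hσeq]
      have := ((((hasDerivAt_id s).sub_const t₀).pow 2).div_const (16 * C)).add_const C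
      simp only [id_eq] at this
      refine this.congr_deriv ?_
      push_cast; ring
    have hds : deriv σ = fun s => (s - t₀) / (8 * C) := funext fun s => (h1 s).deriv
    have h2 : deriv (deriv σ) t = 1 / (8 * C) := by
      rw [hds]
      have : HasDerivAt (fun s : ℝ => (s - t₀) / (8 * C)) (1 / (8 * C)) t := by
        have := ((hasDerivAt_id t).sub_const t₀).div_const (8 * C)
        simpa using this
      exact this.deriv
    rw [h2, hds, h t]
    field_simp
    ring
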